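/- Biased Erdős–Selfridge criterion: if $\sum_{A\in\mathcal{F}} (1+b)^{-|A|/a} < 1$, then in the biased $(a{:}b)$ Maker–Breaker game on $(X,\mathcal{F})$ in which Breaker moves first (Maker claims $a$ elements and Breaker claims $b$ elements per move), Breaker has a winning strategy. -/

import Mathlib

/-- `MWin board F a b t M B` : in the biased `(a : b)` Maker–Breaker positional game on
the board `board` with family of winning sets `F`, from the position where Maker has
claimed `M`, Breaker has claimed `B`, and it is Maker's turn iff `t = true`, Maker has
a winning strategy.  In each move Maker claims `a` previously unclaimed elements and
Breaker claims `b` previously unclaimed elements (or all remaining elements, if fewer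
are left).  Maker wins when he has claimed all elements of some winning set. -/
inductive MWin {α : Type*} [DecidableEq α] (board : Finset α) (F : Set (Finset α))
    (a b : ℕ) : Bool → Finset α → Finset α → Prop
  | win (t : Bool) (M B A : Finset α) (hA : A ∈ F) (hsub : A ⊆ M) : MWin board F a b t M B
  | maker (M B m : Finset α) (hm : m ⊆ board \ (M ∪ B))
      (hcard : m.card = min a (board \ (M ∪ B)).card)
      (h : MWin board F a b false (M ∪ m) B) : MWin board F a b true M B
  | breaker (M B : Finset α)
      (h : ∀ m ⊆ board \ (M ∪ B), m.card = min b (board \ (M ∪ B)).card →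
        MWin board F a b true M (B ∪ m)) : MWin board F a b false M B

section ES

variable {α : Type} [DecidableEq α]

noncomputable def espot (F : Finset (Finset α)) (q : ℝ) (M B : Finset α) : ℝ :=
  ∑ A ∈ F.filter fun A => Disjoint A B, q ^ (-((A \ M).card : ℤ))

noncomputable def eswt (F : Finset (Finset α)) (q : ℝ) (M B : Finset α) (x : α) : ℝ :=
  ∑ A ∈ F.filter fun A => Disjoint A B ∧ x ∈ A, q ^ (-((A \ M).card : ℤ))

variable {F : Finset (Finset α)} {q : ℝ} (hq : 1 ≤ q)

include hq

lemma hq0 : 0 < q := lt_of_lt_of_le one_pos hq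

lemma eswt_nonneg (M B : Finset α) (x : α) : 0 ≤ eswt F q M B x :=
  Finset.sum_nonneg fun A _ => (zpow_pos (hq0 hq) _).le

lemma espot_anti (M : Finset α) {B B' : Finset α} (hBB : B ⊆ B') :
    espot F q M B' ≤ espot F q M B := by
  apply Finset.sum_le_sum_of_subset_of_nonneg
  · intro A hA
    simp only [Finset.mem_filter] at hA ⊢
    exact ⟨hA.1, hA.2.mono_right hBB⟩
  · exact fun A _ _ => (zpow_pos (hq0 hq) _).le

lemma eswt_anti (M : Finset α) {B B' : Finset α} (hBB : B ⊆ B') (x : α) :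
    eswt F q M B' x ≤ eswt F q M B x := by
  apply Finset.sum_le_sum_of_subset_of_nonneg
  · intro A hA
    simp only [Finset.mem_filter] at hA ⊢
    exact ⟨hA.1, hA.2.1.mono_right hBB, hA.2.2⟩
  · exact fun A _ _ => (zpow_pos (hq0 hq) _).le

lemma espot_breaker (M B : Finset α) (y : α) :
    espot F q M (B ∪ {y}) = espot F q M B - eswt F q M B y := by
  have hsplit := Finset.sum_filter_add_sum_filter_not
    (F.filter fun A => Disjoint A B) (fun A => y ∈ A)
    (fun A => q ^ (-((A \ M).card : ℤ)))
  rw [Finset.filter_filter, Finset.filter_filter] at hsplit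
  have hfe : F.filter (fun A => Disjoint A (B ∪ {y})) =
      F.filter fun A => Disjoint A B ∧ y ∉ A := by
    apply Finset.filter_congr
    intro A _
    simp [Finset.disjoint_union_right, Finset.disjoint_singleton_right]
    exact and_comm
  simp only [espot, eswt, hfe]
  rw [← hsplit]
  ring

lemma key_term (M : Finset α) (x : α) (A : Finset α) :
    q ^ (-(((A \ (M ∪ {x})).card : ℤ))) ≤ q * q ^ (-(((A \ M).card : ℤ))) := by
  have hsub : A \ M ⊆ insert x (A \ (M ∪ {x})) := by
    intro y hy
    simp only [Finset.mem_sdiff] at hy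
    by_cases hxy : y = x
    · simp [hxy]
    · simp only [Finset.mem_insert, Finset.mem_sdiff, Finset.mem_union,
        Finset.mem_singleton]
      exact Or.inr ⟨hy.1, fun h => h.elim (fun h' => hy.2 h') hxy⟩
  have hcard : (A \ M).card ≤ (A \ (M ∪ {x})).card + 1 :=
    le_trans (Finset.card_le_card hsub) (Finset.card_insert_le _ _)
  have heq : q * q ^ (-(((A \ M).card : ℤ))) = q ^ (1 - ((A \ M).card : ℤ)) := by
    rw [sub_eq_add_neg, zpow_add₀ (hq0 hq).ne', zpow_one]
  rw [heq]
  apply zpow_le_zpow_right₀ hq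
  omega

lemma espot_maker (M B : Finset α) (x : α) :
    espot F q (M ∪ {x}) B ≤ espot F q M B + (q - 1) * eswt F q M B x := by
  have hsplit : (q - 1) * eswt F q M B x =
      ∑ A ∈ F.filter fun A => Disjoint A B,
        (if x ∈ A then (q - 1) * q ^ (-(((A \ M).card : ℤ))) else 0) := by
    rw [Finset.sum_ite, Finset.sum_const_zero, add_zero, Finset.filter_filter]
    rw [eswt, Finset.mul_sum]
  rw [hsplit]
  simp only [espot]
  rw [← Finset.sum_add_distrib]
  apply Finset.sum_le_sum
  intro A _
  by_cases hx : x ∈ A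
  · simp only [hx, if_true]
    have := key_term hq M x A
    linarith
  · have hAx : A \ (M ∪ {x}) = A \ M := by
      ext z
      simp only [Finset.mem_sdiff, Finset.mem_union, Finset.mem_singleton]
      constructor
      · rintro ⟨hz, h2⟩; exact ⟨hz, fun h => h2 (Or.inl h)⟩
      · rintro ⟨hz, h2⟩
        refine ⟨hz, fun h => ?_⟩
        rcases h with h | h
        · exact h2 h
        · exact hx (h ▸ hz)
    rw [hAx]; simp [hx]

lemma eswt_maker (M B : Finset α) (x y : α) :
    eswt F q (M ∪ {x}) B y ≤ q * eswt F q M B y := by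
  rw [eswt, eswt, Finset.mul_sum]
  exact Finset.sum_le_sum fun A _ => key_term hq M x A

lemma makerBound (B : Finset α) :
    ∀ (m M : Finset α) (W : ℝ), 0 ≤ W → (∀ x ∈ m, eswt F q M B x ≤ W) →
      espot F q (M ∪ m) B ≤ espot F q M B + (q ^ m.card - 1) * W := by
  intro m
  induction m using Finset.induction_on with
  | empty => intro M W _ _; simp
  | @insert x s hxs ih =>
    intro M W hW hwt
    have hMu : M ∪ insert x s = (M ∪ {x}) ∪ s := by
      ext z
      simp only [Finset.mem_union, Finset.mem_insert, Finset.mem_singleton]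
      tauto
    rw [hMu]
    have h1 : espot F q ((M ∪ {x}) ∪ s) B ≤
        espot F q (M ∪ {x}) B + (q ^ s.card - 1) * (q * W) := by
      apply ih (M ∪ {x}) (q * W) (mul_nonneg (hq0 hq).le hW)
      intro y hy
      calc eswt F q (M ∪ {x}) B y ≤ q * eswt F q M B y := eswt_maker hq M B x y
        _ ≤ q * W := by
            apply mul_le_mul_of_nonneg_left _ (hq0 hq).le
            exact hwt y (Finset.mem_insert_of_mem hy)
    have h2 : espot F q (M ∪ {x}) B ≤ espot F q M B + (q - 1) * eswt F q M B x :=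
      espot_maker hq M B x
    have h3 : eswt F q M B x ≤ W := hwt x (Finset.mem_insert_self x s)
    have hcard : (insert x s).card = s.card + 1 := Finset.card_insert_of_notMem hxs
    rw [hcard]
    have hq1 : 0 ≤ q - 1 := by linarith
    have h4 : (q - 1) * eswt F q M B x ≤ (q - 1) * W :=
      mul_le_mul_of_nonneg_left h3 hq1
    have hring : (q ^ (s.card + 1) - 1) * W = (q - 1) * W + (q ^ s.card - 1) * (q * W) := by
      ring
    linarith

lemma breakerBound (X : Finset α) (M : Finset α) :
    ∀ (k : ℕ) (B : Finset α), k ≤ (X \ (M ∪ B)).card →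
      ∃ Y ⊆ X \ (M ∪ B), Y.card = k ∧
        ∀ x ∈ X \ (M ∪ (B ∪ Y)),
          espot F q M (B ∪ Y) + (k : ℝ) * eswt F q M (B ∪ Y) x ≤ espot F q M B := by
  intro k
  induction k with
  | zero =>
    intro B _
    exact ⟨∅, Finset.empty_subset _, Finset.card_empty, by simp⟩
  | succ k ih =>
    intro B hk
    have hne : (X \ (M ∪ B)).Nonempty := Finset.card_pos.mp (by omega)
    obtain ⟨y, hy, hymax⟩ := Finset.exists_max_image (X \ (M ∪ B)) (eswt F q M B) hne
    have hrem : X \ (M ∪ (B ∪ {y})) = (X \ (M ∪ B)) \ {y} := by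
      ext z
      simp only [Finset.mem_sdiff, Finset.mem_union, Finset.mem_singleton]
      tauto
    have hcard' : k ≤ (X \ (M ∪ (B ∪ {y}))).card := by
      rw [hrem, Finset.card_sdiff_of_subset (Finset.singleton_subset_iff.mpr hy)]
      simp only [Finset.card_singleton]
      omega
    obtain ⟨Y', hY'sub, hY'card, hY'prop⟩ := ih (B ∪ {y}) hcard'
    have hyY' : y ∉ Y' := by
      intro hcon
      have := hY'sub hcon
      rw [hrem] at this
      simp at this
    have hBY : B ∪ insert y Y' = (B ∪ {y}) ∪ Y' := by
      rw [Finset.insert_eq, ← Finset.union_assoc]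
    refine ⟨insert y Y', ?_, ?_, ?_⟩
    · rw [Finset.insert_subset_iff]
      exact ⟨hy, hY'sub.trans (by rw [hrem]; exact Finset.sdiff_subset)⟩
    · rw [Finset.card_insert_of_notMem hyY', hY'card]
    · intro x hx
      rw [hBY] at hx ⊢
      have hp := hY'prop x hx
      have hxrem : x ∈ X \ (M ∪ B) := by
        simp only [Finset.mem_sdiff, Finset.mem_union] at hx ⊢
        tauto
      have hw1 : eswt F q M ((B ∪ {y}) ∪ Y') x ≤ eswt F q M B x :=
        eswt_anti hq M (Finset.subset_union_left.trans Finset.subset_union_left) x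
      have hw2 : eswt F q M B x ≤ eswt F q M B y := hymax x hxrem
      have hbk : espot F q M (B ∪ {y}) = espot F q M B - eswt F q M B y :=
        espot_breaker hq M B y
      push_cast
      linarith

lemma esNoWin (X : Finset α) (a b : ℕ) (hqa : q ^ a = 1 + (b : ℝ))
    {t : Bool} {M B : Finset α}
    (hw : MWin X (↑F : Set (Finset α)) a b t M B) :
    Disjoint M B →
    (if t then ∀ m ⊆ X \ (M ∪ B), m.card ≤ a → espot F q (M ∪ m) B < 1
      else espot F q M B < 1) → False := by
  induction hw with
  | win t M B A hA hsub =>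
    intro hdisj hcond
    have hpot : espot F q M B < 1 := by
      cases t with
      | false => simpa using hcond
      | true =>
        have := hcond ∅ (Finset.empty_subset _) (by simp)
        simpa using this
    have hAF : A ∈ F.filter fun A' => Disjoint A' B :=
      Finset.mem_filter.mpr ⟨hA, hdisj.mono_left hsub⟩
    have hterm : q ^ (-(((A \ M).card : ℤ))) = 1 := by
      rw [Finset.sdiff_eq_empty_iff_subset.mpr hsub]
      simp
    have hone : (1 : ℝ) ≤ espot F q M B := by
      rw [← hterm]
      simp only [espot]
      exact Finset.single_le_sum
        (f := fun A' => q ^ (-(((A' \ M).card : ℤ))))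
        (fun A' _ => (zpow_pos (hq0 hq) _).le) hAF
    linarith
  | maker M B m hm hcard h ih =>
    intro hdisj hcond
    have hcond' : ∀ m' ⊆ X \ (M ∪ B), m'.card ≤ a → espot F q (M ∪ m') B < 1 := hcond
    refine ih ?_ ?_
    · refine Finset.disjoint_union_left.mpr ⟨hdisj, ?_⟩
      exact Finset.sdiff_disjoint.mono hm Finset.subset_union_right
    · exact hcond' m hm (by rw [hcard]; exact min_le_left _ _)
  | breaker M B h ih =>
    intro hdisj hcond
    have hcond' : espot F q M B < 1 := hcond
    obtain ⟨Y, hYsub, hYcard, hYprop⟩ :=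
      breakerBound hq X M (min b (X \ (M ∪ B)).card) B (min_le_right _ _)
    refine ih Y hYsub hYcard ?_ ?_
    · refine Finset.disjoint_union_right.mpr ⟨hdisj, ?_⟩
      exact (Finset.sdiff_disjoint.mono hYsub Finset.subset_union_left).symm
    · show ∀ m ⊆ X \ (M ∪ (B ∪ Y)), m.card ≤ a → espot F q (M ∪ m) (B ∪ Y) < 1
      intro m hm hmcard
      rcases Finset.eq_empty_or_nonempty m with hm0 | hmne
      · rw [hm0, Finset.union_empty]
        exact lt_of_le_of_lt (espot_anti hq M Finset.subset_union_left) hcond'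
      · by_cases hkb : min b (X \ (M ∪ B)).card = b
        · obtain ⟨x₀, hx₀m, hx₀max⟩ :=
            Finset.exists_max_image m (eswt F q M (B ∪ Y)) hmne
          set W := eswt F q M (B ∪ Y) x₀ with hWdef
          have hW0 : 0 ≤ W := eswt_nonneg hq _ _ _
          have h1 := makerBound hq (B ∪ Y) m M W hW0 hx₀max
          have h2 : q ^ m.card ≤ q ^ a := pow_le_pow_right₀ hq hmcard
          have h3 := hYprop x₀ (hm hx₀m)
          rw [hkb] at h3
          have h4 : (q ^ m.card - 1) * W ≤ (q ^ a - 1) * W :=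
            mul_le_mul_of_nonneg_right (by linarith) hW0
          rw [hqa] at h4
          linarith
        · exfalso
          have hc : min b (X \ (M ∪ B)).card = (X \ (M ∪ B)).card := by omega
          have hYeq : Y = X \ (M ∪ B) :=
            Finset.eq_of_subset_of_card_le hYsub (by omega)
          have hempty : X \ (M ∪ (B ∪ Y)) = ∅ := by
            ext z
            simp only [Finset.mem_sdiff, Finset.mem_union, Finset.notMem_empty,
              iff_false, not_and, not_not]
            intro hz
            by_contra hcon
            push_neg at hcon
            have : z ∈ Y := by
              rw [hYeq]
              simp only [Finset.mem_sdiff, Finset.mem_union]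
              tauto
            tauto
          rw [hempty] at hm
          rcases hmne with ⟨z, hz⟩
          exact absurd (hm hz) (Finset.notMem_empty z)

end ES

/-- Biased Erdős–Selfridge criterion: if `∑_{A ∈ F} (1+b)^{-|A|/a} < 1`, then Breaker
wins the biased `(a : b)` Maker–Breaker game in which Breaker moves first. -/
theorem stmt8 {α : Type} [DecidableEq α] (X : Finset α) (F : Finset (Finset α))
    (a b : ℕ) (ha : 1 ≤ a) (hb : 1 ≤ b) (hF : ∀ A ∈ F, A ⊆ X)
    (h : ∑ A ∈ F, ((1 : ℝ) + b) ^ (-(A.card : ℝ) / a) < 1) :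
    ¬ MWin X (↑F : Set (Finset α)) a b false ∅ ∅ := by
  intro hw
  have h0 : (0 : ℝ) < 1 + b := by positivity
  have ha0 : (a : ℝ) ≠ 0 := Nat.cast_ne_zero.mpr (by omega)
  set q : ℝ := (1 + (b : ℝ)) ^ ((a : ℝ)⁻¹) with hqdef
  have hq : 1 ≤ q := Real.one_le_rpow (by linarith [Nat.cast_nonneg (α := ℝ) b]) (by positivity)
  have hqa : q ^ a = 1 + (b : ℝ) := by
    rw [hqdef, ← Real.rpow_natCast ((1 + (b : ℝ)) ^ ((a : ℝ)⁻¹)) a,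
      ← Real.rpow_mul h0.le, inv_mul_cancel₀ ha0, Real.rpow_one]
  have hterm : ∀ c : ℕ, q ^ (-(c : ℤ)) = (1 + (b : ℝ)) ^ (-(c : ℝ) / a) := by
    intro c
    have h1 : -(c : ℝ) / a = (a : ℝ)⁻¹ * (-(c : ℝ)) := by ring
    rw [h1, Real.rpow_mul h0.le, ← hqdef]
    rw [show (-(c : ℝ)) = ((-(c : ℤ) : ℤ) : ℝ) by push_cast; ring]
    rw [Real.rpow_intCast]
  have hinit : espot F q ∅ ∅ < 1 := by
    have : espot F q ∅ ∅ = ∑ A ∈ F, ((1 : ℝ) + b) ^ (-(A.card : ℝ) / a) := by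
      unfold espot
      rw [Finset.filter_true_of_mem (fun A _ => Finset.disjoint_empty_right A)]
      apply Finset.sum_congr rfl
      intro A _
      rw [Finset.sdiff_empty, hterm]
    rw [this]
    exact h
  exact esNoWin hq X a b hqa hw (Finset.disjoint_empty_right ∅) (by simpa using hinit)
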